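/- The map (π_0,…,π_{s−1}, k_c + l_d) ↦ ((η(π_0),…,η(π_{s−1}), k_c), (ζ(π_0),…,ζ(π_{s−1}), l_d)) is a bijection from P^{k_c+l_d}_ρ to F^{k_c,l_d}_> which preserves the size and the colour sequence. -/

import Mathlib

open Classical

open Classical in
/-- `chi P` is 1 if `P` holds and 0 otherwise. -/
noncomputable def chi (P : Prop) : ℤ := if P then 1 else 0

/-- A primary-coloured integer `k_{c_u}` is the pair `(k, u)`. -/
abbrev PCInt : Type := ℤ × ℤ

/-- A secondary-coloured integer `k_{c_{x,y}}` is the pair `(k, (x, y))` with `x ≤ y`. -/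
abbrev SCInt : Type := ℤ × (ℤ × ℤ)

/-- The order on primary-coloured integers: `k_{c_u} ≥ l_{c_v} ↔ k - l ≥ χ(u < v)`. -/
def pge (a b : PCInt) : Prop := a.1 - b.1 ≥ if a.2 < b.2 then 1 else 0

/-- The strict order on primary-coloured integers: `k_{c_u} > l_{c_v} ↔ k - l ≥ χ(u ≤ v)`. -/
def pgt (a b : PCInt) : Prop := a.1 - b.1 ≥ if a.2 ≤ b.2 then 1 else 0

/-- `u` is a valid primary colour: `u ∈ O = {1,…,m}`. -/
def PVal (m : ℕ) (u : ℤ) : Prop := 1 ≤ u ∧ u ≤ (m : ℤ)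

/-- `(x,y)` is a valid secondary colour: `x ≤ y ∈ O = {1,…,m}`. -/
def SVal (m : ℕ) (c : ℤ × ℤ) : Prop := 1 ≤ c.1 ∧ c.1 ≤ c.2 ∧ c.2 ≤ (m : ℤ)

/-- `η(2k_{c_{x,y}}) = k_{c_y}` and `η((2k+1)_{c_{x,y}}) = (k+1)_{c_x}`. -/
def etaP (a : SCInt) : PCInt :=
  if a.1 % 2 = 0 then (a.1 / 2, a.2.2) else ((a.1 - 1) / 2 + 1, a.2.1)

/-- `ζ(2k_{c_{x,y}}) = k_{c_x}` and `ζ((2k+1)_{c_{x,y}}) = k_{c_y}`. -/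
def zetaP (a : SCInt) : PCInt :=
  if a.1 % 2 = 0 then (a.1 / 2, a.2.1) else ((a.1 - 1) / 2, a.2.2)

/-- `ρ(c_{x',y'}, c_{x,y}) = χ(x ≥ x') + χ(y ≥ y') - χ(y ≥ y' > x ≥ x')`
(the first argument is the colour of the earlier, larger part). -/
noncomputable def rho (c d : ℤ × ℤ) : ℤ :=
  chi (c.1 ≤ d.1) + chi (c.2 ≤ d.2) - chi (c.2 ≤ d.2 ∧ d.1 < c.2 ∧ c.1 ≤ d.1)

/-- `k_c ≫_ρ l_d ↔ k - l ≥ ρ(c, d)`. -/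
noncomputable def ggrho (a b : SCInt) : Prop := a.1 - b.1 ≥ rho a.2 b.2

/-- The sum `k_{c_u} + l_{c_v} = (k+l)_{c_u c_v}` of two primary-coloured integers, as a
secondary-coloured integer. -/
def addPC (a b : PCInt) : SCInt := (a.1 + b.1, (min a.2 b.2, max a.2 b.2))

/-- `P^{g}_ρ`: finite sequences of secondary-coloured integers whose consecutive parts
satisfy `≫_ρ` and whose last part equals `g`. -/
noncomputable def PRhoLast (m : ℕ) (g : SCInt) : Set (List SCInt) :=
  {π | π.getLast? = some g ∧ (∀ a ∈ π, SVal m a.2) ∧ π.Chain' ggrho}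

/-- `F^{k_c,l_d}_>`: the `C_n^{(1)}`-Frobenius partitions with relation `>` and ground
`k_c, l_d` — pairs `(μ,ν)` of sequences of primary-coloured integers of the same length,
strictly decreasing for `>`, with last parts `k_c` and `l_d`, and satisfying
`ν_j + 1 ≥ μ_j ≥ ν_j` for all `j < s`. -/
def FrobSet (m : ℕ) (kc ld : PCInt) : Set (List PCInt × List PCInt) :=
  {mn | mn.1.length = mn.2.length ∧
        mn.1.getLast? = some kc ∧ mn.2.getLast? = some ld ∧
        (∀ a ∈ mn.1, PVal m a.2) ∧ (∀ a ∈ mn.2, PVal m a.2) ∧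
        mn.1.Chain' pgt ∧ mn.2.Chain' pgt ∧
        (∀ j : ℕ, j + 1 < mn.1.length → ∀ a b : PCInt,
          mn.1[j]? = some a → mn.2[j]? = some b →
          pge a b ∧ pge (b.1 + 1, b.2) a)}

/-- the map
`(π_0,…,π_{s-1}, k_c + l_d) ↦ ((η(π_0),…,η(π_{s-1}),k_c), (ζ(π_0),…,ζ(π_{s-1}),l_d))`
is a bijection from `P^{k_c+l_d}_ρ` to `F^{k_c,l_d}_>` preserving size and colour
sequence. -/
-- key chain equivalence
lemma key (a b : SCInt) (ha : a.2.1 ≤ a.2.2) (hb : b.2.1 ≤ b.2.2) :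
    ggrho a b ↔ (pgt (etaP a) (etaP b) ∧ pgt (zetaP a) (zetaP b)) := by
  rcases Int.emod_two_eq_zero_or_one a.1 with h1 | h1 <;>
  rcases Int.emod_two_eq_zero_or_one b.1 with h2 | h2 <;>
  simp only [ggrho, rho, chi, pgt, etaP, zetaP, h1, h2, if_true, if_false,
    reduceIte] <;> split_ifs <;> omega

lemma pair_lemma (a : SCInt) (h : a.2.1 ≤ a.2.2) :
    pge (etaP a) (zetaP a) ∧ pge ((zetaP a).1 + 1, (zetaP a).2) (etaP a) := by
  rcases Int.emod_two_eq_zero_or_one a.1 with h1 | h1 <;>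
  simp only [pge, etaP, zetaP, h1, reduceIte] <;> split_ifs <;> omega

lemma recomb (a : SCInt) (h : a.2.1 ≤ a.2.2) : addPC (etaP a) (zetaP a) = a := by
  obtain ⟨k, x, y⟩ := a
  rcases Int.emod_two_eq_zero_or_one k with h1 | h1 <;>
  simp only [addPC, etaP, zetaP, h1, reduceIte, Prod.mk.injEq] <;>
  simp_all [min_def, max_def] <;> omega

lemma split_add (a b : PCInt) (h1 : pge a b) (h2 : pge (b.1 + 1, b.2) a) :
    etaP (addPC a b) = a ∧ zetaP (addPC a b) = b := by
  obtain ⟨k, u⟩ := a; obtain ⟨l, v⟩ := b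
  simp only [pge] at h1 h2
  split_ifs at h1 h2 <;>
  · constructor <;>
    · simp only [addPC, etaP, zetaP, min_def, max_def]
      split_ifs <;> simp only [Prod.mk.injEq, and_true, true_and] <;> omega

def Pairrel (a b : PCInt) : Prop := pge a b ∧ pge (b.1 + 1, b.2) a

lemma mem_zipWith' {α β γ : Type*} {f : α → β → γ} {c : γ} :
    ∀ {l₁ : List α} {l₂ : List β}, c ∈ List.zipWith f l₁ l₂ →
      ∃ a b, a ∈ l₁ ∧ b ∈ l₂ ∧ f a b = c
  | [], _, h => by simp at h
  | _ :: _, [], h => by simp at h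
  | a :: l₁, b :: l₂, h => by
      rcases List.mem_cons.1 h with h | h
      · exact ⟨a, b, .head _, .head _, h.symm⟩
      · obtain ⟨a', b', h1, h2, h3⟩ := mem_zipWith' h
        exact ⟨a', b', .tail _ h1, .tail _ h2, h3⟩

lemma zip_eta : ∀ {μ ν : List PCInt}, List.Forall₂ Pairrel μ ν →
    (List.zipWith addPC μ ν).map etaP = μ ∧ (List.zipWith addPC μ ν).map zetaP = ν
  | _, _, .nil => ⟨rfl, rfl⟩
  | _, _, .cons h t => by
      obtain ⟨h1, h2⟩ := split_add _ _ h.1 h.2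
      obtain ⟨ih1, ih2⟩ := zip_eta t
      simp [h1, h2, ih1, ih2]

lemma chain_equiv (l : List SCInt) (hl : ∀ a ∈ l, a.2.1 ≤ a.2.2) :
    l.Chain' ggrho ↔ (l.map etaP).Chain' pgt ∧ (l.map zetaP).Chain' pgt := by
  unfold List.Chain'
  rw [List.isChain_map, List.isChain_map]
  simp only [List.isChain_iff_getElem]
  constructor
  · intro h
    refine ⟨fun i hi => ?_, fun i hi => ?_⟩
    · exact ((key _ _ (hl _ (List.getElem_mem _)) (hl _ (List.getElem_mem _))).1 (h i hi)).1
    · exact ((key _ _ (hl _ (List.getElem_mem _)) (hl _ (List.getElem_mem _))).1 (h i hi)).2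
  · rintro ⟨h1, h2⟩ i hi
    exact (key _ _ (hl _ (List.getElem_mem _)) (hl _ (List.getElem_mem _))).2 ⟨h1 i hi, h2 i hi⟩

lemma map_inj : ∀ (l l' : List SCInt), (∀ a ∈ l, a.2.1 ≤ a.2.2) → (∀ a ∈ l', a.2.1 ≤ a.2.2) →
    l.map etaP = l'.map etaP → l.map zetaP = l'.map zetaP → l = l'
  | [], [], _, _, _, _ => rfl
  | [], _ :: _, _, _, h, _ => by simp at h
  | _ :: _, [], _, _, h, _ => by simp at h
  | a :: l, b :: l', h1, h2, he, hz => by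
      simp only [List.map_cons, List.cons.injEq] at he hz
      have hab : a = b := by
        rw [← recomb a (h1 a (.head _)), ← recomb b (h2 b (.head _)), he.1, hz.1]
      rw [hab,
        map_inj l l' (fun x hx => h1 x (.tail _ hx)) (fun x hx => h2 x (.tail _ hx)) he.2 hz.2]

lemma pval_eta (m : ℕ) (a : SCInt) (h : SVal m a.2) : PVal m (etaP a).2 := by
  rcases Int.emod_two_eq_zero_or_one a.1 with h1 | h1 <;> simp only [etaP, h1, reduceIte]
  · exact ⟨h.1.trans h.2.1, h.2.2⟩
  · exact ⟨h.1, h.2.1.trans h.2.2⟩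

lemma pval_zeta (m : ℕ) (a : SCInt) (h : SVal m a.2) : PVal m (zetaP a).2 := by
  rcases Int.emod_two_eq_zero_or_one a.1 with h1 | h1 <;> simp only [zetaP, h1, reduceIte]
  · exact ⟨h.1, h.2.1.trans h.2.2⟩
  · exact ⟨h.1.trans h.2.1, h.2.2⟩

lemma sval_add {m : ℕ} {a b : PCInt} (ha : PVal m a.2) (hb : PVal m b.2) :
    SVal m (addPC a b).2 :=
  ⟨le_min ha.1 hb.1, min_le_max, max_le ha.2 hb.2⟩

lemma eta_zeta_fst (a : SCInt) : (etaP a).1 + (zetaP a).1 = a.1 := by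
  rcases Int.emod_two_eq_zero_or_one a.1 with h1 | h1 <;>
    simp [etaP, zetaP, h1] <;> omega

lemma eta_zeta_snd (a : SCInt) :
    ({a.2.1, a.2.2} : Multiset ℤ) = {(etaP a).2} + {(zetaP a).2} := by
  rcases Int.emod_two_eq_zero_or_one a.1 with h1 | h1 <;>
    simp [etaP, zetaP, h1, Multiset.singleton_add] <;>
    first | rfl | exact Multiset.cons_swap _ _ _

lemma sum_fst : ∀ l : List SCInt,
    (l.map Prod.fst).sum = ((l.map etaP).map Prod.fst).sum + ((l.map zetaP).map Prod.fst).sum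
  | [] => by simp
  | a :: l => by
      simp only [List.map_cons, List.sum_cons, sum_fst l]
      have := eta_zeta_fst a
      omega

lemma sum_snd : ∀ l : List SCInt,
    (l.map (fun a => ({a.2.1, a.2.2} : Multiset ℤ))).sum =
      (((l.map etaP).map Prod.snd : List ℤ) : Multiset ℤ) +
      (((l.map zetaP).map Prod.snd : List ℤ) : Multiset ℤ)
  | [] => by simp
  | a :: l => by
      simp only [List.map_cons, List.sum_cons, sum_snd l, ← Multiset.cons_coe,
        eta_zeta_snd a, ← Multiset.singleton_add]
      abel

theorem stmt_13 (m : ℕ) (hm : 1 ≤ m) (kc ld : PCInt)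
    (hkc : PVal m kc.2) (hld : PVal m ld.2)
    (hge : pge kc ld) (hle : pge (ld.1 + 1, ld.2) kc) :
    Set.BijOn (fun π : List SCInt => (π.map etaP, π.map zetaP))
      (PRhoLast m (addPC kc ld)) (FrobSet m kc ld) ∧
    ∀ π ∈ PRhoLast m (addPC kc ld),
      -- the size is preserved
      ((π.dropLast.map Prod.fst).sum =
        ((π.map etaP).dropLast.map Prod.fst).sum +
        ((π.map zetaP).dropLast.map Prod.fst).sum) ∧
      -- the colour sequence is preserved
      ((π.dropLast.map (fun a => ({a.2.1, a.2.2} : Multiset ℤ))).sum =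
        (((π.map etaP).dropLast.map Prod.snd : List ℤ) : Multiset ℤ) +
        (((π.map zetaP).dropLast.map Prod.snd : List ℤ) : Multiset ℤ)) := by
  have hsplit := split_add kc ld hge hle
  constructor
  · refine ⟨?_, ?_, ?_⟩
    · -- MapsTo
      rintro π ⟨hlast, hsval, hchain⟩
      have hx : ∀ a ∈ π, a.2.1 ≤ a.2.2 := fun a ha => (hsval a ha).2.1
      refine ⟨by simp, ?_, ?_, ?_, ?_, ?_, ?_, ?_⟩
      · rw [List.getLast?_map, hlast]; simp [hsplit.1]
      · rw [List.getLast?_map, hlast]; simp [hsplit.2]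
      · intro a ha
        obtain ⟨c, hc, rfl⟩ := List.mem_map.1 ha
        exact pval_eta m c (hsval c hc)
      · intro a ha
        obtain ⟨c, hc, rfl⟩ := List.mem_map.1 ha
        exact pval_zeta m c (hsval c hc)
      · exact ((chain_equiv π hx).1 hchain).1
      · exact ((chain_equiv π hx).1 hchain).2
      · intro j hj a b haj hbj
        rw [List.getElem?_map] at haj hbj
        cases hc : π[j]? with
        | none => rw [hc] at haj; simp at haj
        | some c =>
          rw [hc] at haj hbj
          simp only [Option.map_some, Option.some.injEq] at haj hbj
          subst haj; subst hbj
          exact ⟨(pair_lemma c (hx c (List.mem_of_getElem? hc))).1,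
                 (pair_lemma c (hx c (List.mem_of_getElem? hc))).2⟩
    · -- InjOn
      rintro π ⟨-, hs, -⟩ π' ⟨-, hs', -⟩ h
      simp only [Prod.mk.injEq] at h
      exact map_inj π π' (fun a ha => (hs a ha).2.1) (fun a ha => (hs' a ha).2.1) h.1 h.2
    · -- SurjOn
      rintro ⟨μ, ν⟩ ⟨hlen, hlμ, hlν, hPμ, hPν, hCμ, hCν, hpair⟩
      have hF : List.Forall₂ Pairrel μ ν := by
        rw [List.forall₂_iff_get]
        refine ⟨hlen, fun i h1 h2 => ?_⟩
        by_cases hi : i + 1 < μ.length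
        · exact hpair i hi _ _ (List.getElem?_eq_getElem h1) (List.getElem?_eq_getElem h2)
        · have hieq : i = μ.length - 1 := by omega
          have hμi : μ[i]? = some kc := by
            rw [hieq, ← List.getLast?_eq_getElem?, hlμ]
          have hνi : ν[i]? = some ld := by
            rw [hieq, hlen, ← List.getLast?_eq_getElem?, hlν]
          rw [List.getElem?_eq_getElem h1] at hμi
          rw [List.getElem?_eq_getElem h2] at hνi
          simp only [Option.some.injEq] at hμi hνi
          rw [List.get_eq_getElem, List.get_eq_getElem, hμi, hνi]
          exact ⟨hge, hle⟩
      obtain ⟨hmμ, hmν⟩ := zip_eta hF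
      set π := List.zipWith addPC μ ν with hπ
      have hxall : ∀ a ∈ π, a.2.1 ≤ a.2.2 := by
        intro a ha
        obtain ⟨u, v, -, -, rfl⟩ := mem_zipWith' ha
        exact min_le_max
      refine ⟨π, ⟨?_, ?_, ?_⟩, ?_⟩
      · have hne : π ≠ [] := by
          intro h
          rw [h] at hmμ
          simp only [List.map_nil] at hmμ
          rw [← hmμ] at hlμ
          simp at hlμ
        obtain ⟨g, hg⟩ := Option.isSome_iff_exists.1 (List.getLast?_isSome.2 hne)
        have h1 : etaP g = kc := by
          have h := (List.getLast?_map (f := etaP) (l := π)).symm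
          rw [hmμ, hlμ, hg] at h
          simpa using h
        have h2 : zetaP g = ld := by
          have h := (List.getLast?_map (f := zetaP) (l := π)).symm
          rw [hmν, hlν, hg] at h
          simpa using h
        have hgmem : g ∈ π := List.mem_of_mem_getLast? (by rw [hg]; rfl)
        rw [hg, ← recomb g (hxall g hgmem), h1, h2]
      · intro a ha
        obtain ⟨u, v, hu, hv, rfl⟩ := mem_zipWith' ha
        exact sval_add (hPμ u hu) (hPν v hv)
      · exact (chain_equiv π hxall).2 ⟨by rw [hmμ]; exact hCμ, by rw [hmν]; exact hCν⟩
      · simp only [hmμ, hmν]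
  · rintro π ⟨-, -, -⟩
    constructor
    · rw [← List.map_dropLast, ← List.map_dropLast]
      exact sum_fst π.dropLast
    · rw [← List.map_dropLast, ← List.map_dropLast]
      exact sum_snd π.dropLast
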